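/- Let G be a prodiscrete topological group that has a fundamental system 𝓝 = {N_i}_{i∈I} of neighborhoods of the identity consisting of open normal subgroups. Then there is an isomorphism of groups G^∧ = Aut(F_G) ≅ lim_{N∈𝓝} G/N (the inverse limit of the quotient groups G/N over the directed system 𝓝 ordered by reverse inclusion), under which the canonical homomorphism ι_G : G → G^∧ corresponds to the natural map G → lim_{N∈𝓝} G/N. In other words, in this case the prodiscrete completion coincides with the classical completion. -/

import Mathlib

open CategoryTheory

universe u v

namespace ProdiscreteCompletion

variable (G : Type u) [Group G] [TopologicalSpace G]

/-- The category `G-Set` of continuous discrete `G`-sets: `G`-sets in which the stabilizer of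
every point is an open subgroup of `G` (equivalently, the action map is continuous for the
discrete topology on the set). -/
abbrev ContGSet :=
  ObjectProperty.FullSubcategory (fun X : Action (Type u) G =>
    ∀ x : X.V, IsOpen {g : G | X.ρ g x = x})

/-- The forgetful functor `F_G : G-Set ⥤ Set` on continuous discrete `G`-sets. -/
abbrev forgetContGSet : ContGSet G ⥤ Type u :=
  ObjectProperty.ι _ ⋙ Action.forget _ _

variable {G}

/-- For `g : G`, the natural automorphism of the forgetful functor whose component at each
continuous discrete `G`-set `X` is the action of `g` on `X`. -/
def iotaIso (g : G) : forgetContGSet G ≅ forgetContGSet G :=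
  NatIso.ofComponents
    (fun X => Equiv.toIso
      { toFun := X.obj.ρ g
        invFun := X.obj.ρ g⁻¹
        left_inv := fun x => by
          have h : X.obj.ρ (g⁻¹ * g) x = X.obj.ρ g⁻¹ (X.obj.ρ g x) :=
            ConcreteCategory.congr_hom (X.obj.ρ.map_mul g⁻¹ g) x
          rw [inv_mul_cancel] at h
          rw [Action.ρ_one] at h
          exact h.symm
        right_inv := fun x => by
          have h : X.obj.ρ (g * g⁻¹) x = X.obj.ρ g (X.obj.ρ g⁻¹ x) :=
            ConcreteCategory.congr_hom (X.obj.ρ.map_mul g g⁻¹) x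
          rw [mul_inv_cancel] at h
          rw [Action.ρ_one] at h
          exact h.symm })
    (fun {X Y} f => by ext x; exact (ConcreteCategory.congr_hom (f.hom.comm g) x).symm)

variable (G)

/-- The canonical group homomorphism `ι_G : G → G^∧ = Aut (F_G)` sending `g ∈ G` to the
natural automorphism of the forgetful functor acting by `g` on each continuous discrete
`G`-set. -/
def iota : G →* Aut (forgetContGSet G) where
  toFun := iotaIso
  map_one' := by
    ext X x
    show (iotaIso 1).hom.app X x = _
    simp [iotaIso]
    rfl
  map_mul' g₁ g₂ := by
    ext X x
    have h : X.obj.ρ (g₁ * g₂) x = X.obj.ρ g₁ (X.obj.ρ g₂ x) :=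
      ConcreteCategory.congr_hom (X.obj.ρ.map_mul g₁ g₂) x
    exact h

variable {G}

/-- The stabilizer subgroup `U_{X,x} ⊆ Aut (F_G)` of a point `x` of a continuous discrete
`G`-set `X`. -/
def USub (X : ContGSet G) (x : X.obj.V) : Subgroup (Aut (forgetContGSet G)) where
  carrier := {γ | γ.hom.app X x = x}
  one_mem' := rfl
  mul_mem' := by
    intro γ δ hγ hδ
    show (γ * δ).hom.app X x = x
    rw [Aut.Aut_mul_def]
    show γ.hom.app X (δ.hom.app X x) = x
    rw [show δ.hom.app X x = x from hδ]
    exact hγ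
  inv_mem' := by
    intro γ hγ
    show γ⁻¹.hom.app X x = x
    conv_lhs => rw [← show γ.hom.app X x = x from hγ]
    rw [Aut.Aut_inv_def]
    exact ConcreteCategory.congr_hom (congrArg (fun τ : forgetContGSet G ⟶ forgetContGSet G => τ.app X)
      γ.hom_inv_id) x


variable {G : Type u} [Group G]

/-- The inverse limit `lim_i G/N i` of the quotients of `G` by a family of normal subgroups,
realized as the subgroup of the product `∀ i, G ⧸ N i` consisting of the families compatible
with the natural projections `G ⧸ N i → G ⧸ N j` for `N i ≤ N j`. -/
def inverseLimit {ι : Type v} (N : ι → Subgroup G) [∀ i, (N i).Normal] :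
    Subgroup (∀ i, G ⧸ N i) where
  carrier := {f | ∀ (i j : ι) (h : N i ≤ N j),
    QuotientGroup.map (N i) (N j) (MonoidHom.id G)
      (fun g hg => by simpa using h hg) (f i) = f j}
  one_mem' := fun i j h => by simp
  mul_mem' := by
    intro f g hf hg i j h
    simp only [Pi.mul_apply, map_mul]
    rw [hf i j h, hg i j h]
  inv_mem' := by
    intro f hf i j h
    simp only [Pi.inv_apply, map_inv]
    rw [hf i j h]

section Aux

variable {G : Type u} [Group G] [TopologicalSpace G]

/-- The stabilizer of a point of a continuous discrete `G`-set, as a subgroup of `G`. -/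
def stab (X : ContGSet G) (x : X.obj.V) : Subgroup G where
  carrier := {g | X.obj.ρ g x = x}
  one_mem' := by
    show X.obj.ρ 1 x = x
    rw [map_one]; rfl
  mul_mem' := by
    intro a b ha hb
    show X.obj.ρ (a * b) x = x
    have h : X.obj.ρ (a * b) x = X.obj.ρ a (X.obj.ρ b x) := ConcreteCategory.congr_hom (X.obj.ρ.map_mul a b) x
    rw [h, show X.obj.ρ b x = x from hb, show X.obj.ρ a x = x from ha]
  inv_mem' := by
    intro a ha
    show X.obj.ρ a⁻¹ x = x
    conv_lhs => rw [← show X.obj.ρ a x = x from ha]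
    have h : X.obj.ρ (a⁻¹ * a) x = X.obj.ρ a⁻¹ (X.obj.ρ a x) := ConcreteCategory.congr_hom (X.obj.ρ.map_mul a⁻¹ a) x
    rw [inv_mul_cancel] at h
    rw [← h, map_one]; rfl

lemma rho_mul (X : ContGSet G) (a b : G) (x : X.obj.V) :
    X.obj.ρ (a * b) x = X.obj.ρ a (X.obj.ρ b x) := ConcreteCategory.congr_hom (X.obj.ρ.map_mul a b) x

lemma rho_stab (X : ContGSet G) (x : X.obj.V) {n : G} (hn : n ∈ stab X x) :
    X.obj.ρ n x = x := hn

variable {ι : Type u} {N : ι → Subgroup G} [∀ i, (N i).Normal]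

section

variable (hbasis : (nhds (1 : G)).HasBasis (fun _ : ι => True) (fun i => (N i : Set G)))
variable (hopen : ∀ i, IsOpen (N i : Set G))

include hbasis in
lemma exists_le (X : ContGSet G) (x : X.obj.V) : ∃ i, N i ≤ stab X x := by
  have h : (stab X x : Set G) ∈ nhds (1 : G) :=
    (X.property x).mem_nhds (stab X x).one_mem
  rcases hbasis.mem_iff.mp h with ⟨i, -, hi⟩
  exact ⟨i, hi⟩

include hbasis hopen in
lemma exists_le_le (i j : ι) : ∃ k, N k ≤ N i ∧ N k ≤ N j := by
  have h : ((N i : Set G) ∩ (N j : Set G)) ∈ nhds (1 : G) :=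
    ((hopen i).inter (hopen j)).mem_nhds ⟨(N i).one_mem, (N j).one_mem⟩
  rcases hbasis.mem_iff.mp h with ⟨k, -, hk⟩
  exact ⟨k, fun g hg => (hk hg).1, fun g hg => (hk hg).2⟩

lemma mk_rel (f : inverseLimit N) {i j : ι} (h : N i ≤ N j) {g : G}
    (hg : (QuotientGroup.mk g : G ⧸ N i) = f.1 i) :
    (QuotientGroup.mk g : G ⧸ N j) = f.1 j := by
  have h2 := f.2 i j h
  rw [← hg, QuotientGroup.map_mk] at h2
  simpa using h2

include hbasis hopen in
lemma act_indep (f : inverseLimit N) (X : ContGSet G) (x : X.obj.V) {i j : ι}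
    (hi : N i ≤ stab X x) (hj : N j ≤ stab X x) {a b : G}
    (ha : (QuotientGroup.mk a : G ⧸ N i) = f.1 i)
    (hb : (QuotientGroup.mk b : G ⧸ N j) = f.1 j) :
    X.obj.ρ a x = X.obj.ρ b x := by
  obtain ⟨k, hki, hkj⟩ := exists_le_le hbasis hopen i j
  set c := (f.1 k).out with hc
  have hck : (QuotientGroup.mk c : G ⧸ N k) = f.1 k := QuotientGroup.out_eq' _
  have key : ∀ (j' : ι) (d : G), N j' ≤ stab X x → N k ≤ N j' →
      (QuotientGroup.mk d : G ⧸ N j') = f.1 j' → X.obj.ρ c x = X.obj.ρ d x := by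
    intro j' d hj' hkj' hd
    have h1 : (QuotientGroup.mk d : G ⧸ N j') = QuotientGroup.mk c :=
      hd.trans (mk_rel f hkj' hck).symm
    have h2 : d⁻¹ * c ∈ N j' := (QuotientGroup.eq).mp h1
    calc X.obj.ρ c x = X.obj.ρ (d * (d⁻¹ * c)) x := by rw [mul_inv_cancel_left]
      _ = X.obj.ρ d (X.obj.ρ (d⁻¹ * c) x) := rho_mul X _ _ x
      _ = X.obj.ρ d x := by rw [rho_stab X x (hj' h2)]
  rw [← key i a hi hki ha, key j b hj hkj hb]

/-- The action of a compatible family on a point of a continuous discrete `G`-set. -/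
noncomputable def act (f : inverseLimit N) (X : ContGSet G) (x : X.obj.V) : X.obj.V :=
  X.obj.ρ ((f.1 (exists_le hbasis X x).choose).out) x

include hopen in
lemma act_spec (f : inverseLimit N) (X : ContGSet G) (x : X.obj.V) {i : ι}
    (hi : N i ≤ stab X x) {a : G} (ha : (QuotientGroup.mk a : G ⧸ N i) = f.1 i) :
    act hbasis f X x = X.obj.ρ a x :=
  act_indep hbasis hopen f X x (exists_le hbasis X x).choose_spec hi
    (QuotientGroup.out_eq' _) ha

include hopen in
lemma act_naturality (f : inverseLimit N) {X Y : ContGSet G} (φ : X ⟶ Y) (x : X.obj.V) :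
    φ.hom (act hbasis f X x) = act hbasis f Y (φ.hom x) := by
  obtain ⟨i, hi⟩ := exists_le hbasis X x
  set a := (f.1 i).out with ha
  have hai : (QuotientGroup.mk a : G ⧸ N i) = f.1 i := QuotientGroup.out_eq' _
  have hj : N i ≤ stab Y (φ.hom x) := by
    intro n hn
    show Y.obj.ρ n (φ.hom x) = φ.hom x
    have hc : Y.obj.ρ n (φ.hom x) = φ.hom (X.obj.ρ n x) := (ConcreteCategory.congr_hom (φ.hom.comm n) x).symm
    rw [hc, rho_stab X x (hi hn)]
  rw [act_spec hbasis hopen f X x hi hai, act_spec hbasis hopen f Y (φ.hom x) hj hai]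
  exact ConcreteCategory.congr_hom (φ.hom.comm a) x

include hopen in
lemma act_mul (f g : inverseLimit N) (X : ContGSet G) (x : X.obj.V) :
    act hbasis (f * g) X x = act hbasis f X (act hbasis g X x) := by
  obtain ⟨i, hi⟩ := exists_le hbasis X x
  set a := (f.1 i).out with hadef
  set b := (g.1 i).out with hbdef
  have hai : (QuotientGroup.mk a : G ⧸ N i) = f.1 i := QuotientGroup.out_eq' _
  have hbi : (QuotientGroup.mk b : G ⧸ N i) = g.1 i := QuotientGroup.out_eq' _
  have hgb : act hbasis g X x = X.obj.ρ b x := act_spec hbasis hopen g X x hi hbi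
  have hstab : N i ≤ stab X (X.obj.ρ b x) := by
    intro n hn
    show X.obj.ρ n (X.obj.ρ b x) = X.obj.ρ b x
    have h1 : b⁻¹ * n * b ∈ N i := by
      have := (inferInstance : (N i).Normal).conj_mem n hn b⁻¹
      simpa [mul_assoc] using this
    calc X.obj.ρ n (X.obj.ρ b x) = X.obj.ρ (n * b) x := (rho_mul X n b x).symm
      _ = X.obj.ρ (b * (b⁻¹ * n * b)) x := by group
      _ = X.obj.ρ b (X.obj.ρ (b⁻¹ * n * b) x) := rho_mul X _ _ x
      _ = X.obj.ρ b x := by rw [rho_stab X x (hi h1)]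
  have habi : (QuotientGroup.mk (a * b) : G ⧸ N i) = (f * g).1 i := by
    have : (f * g).1 i = f.1 i * g.1 i := rfl
    rw [this, ← hai, ← hbi, QuotientGroup.mk_mul]
  rw [act_spec hbasis hopen (f * g) X x hi habi, hgb,
    act_spec hbasis hopen f X (X.obj.ρ b x) hstab hai, rho_mul]

include hopen in
lemma act_one (X : ContGSet G) (x : X.obj.V) : act hbasis (1 : inverseLimit N) X x = x := by
  obtain ⟨i, hi⟩ := exists_le hbasis X x
  have h1 : (QuotientGroup.mk (1 : G) : G ⧸ N i) = (1 : inverseLimit N).1 i := by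
    simp
  rw [act_spec hbasis hopen (1 : inverseLimit N) X x hi h1, map_one]; rfl

/-- The natural automorphism of the forgetful functor attached to a compatible family. -/
noncomputable def toAut (f : inverseLimit N) : Aut (forgetContGSet G) :=
  NatIso.ofComponents
    (fun X => Equiv.toIso
      { toFun := act hbasis f X
        invFun := act hbasis f⁻¹ X
        left_inv := fun (x : X.obj.V) => by
          rw [← act_mul hbasis hopen, inv_mul_cancel, act_one hbasis hopen]
        right_inv := fun (x : X.obj.V) => by
          rw [← act_mul hbasis hopen, mul_inv_cancel, act_one hbasis hopen] })
    (fun {X Y} φ => by ext x; exact (act_naturality hbasis hopen f φ x).symm)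

variable [IsTopologicalGroup G]

/-- The quotient `G ⧸ N i` as a continuous discrete `G`-set. -/
def quotObj (i : ι) : ContGSet G :=
  ⟨Action.ofMulAction G (G ⧸ N i), by
    intro x
    induction x using QuotientGroup.induction_on with
    | _ a =>
      have hset : {g : G |
            (Action.ofMulAction G (G ⧸ N i)).ρ g (QuotientGroup.mk a) = QuotientGroup.mk a}
          = (fun g => a⁻¹ * g * a) ⁻¹' (N i : Set G) := by
        ext g
        simp only [Set.mem_setOf_eq, Set.mem_preimage, SetLike.mem_coe,
          Action.ofMulAction_apply, MulAction.Quotient.smul_mk, smul_eq_mul]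
        change ((QuotientGroup.mk (g * a) : G ⧸ N i) = QuotientGroup.mk a) ↔ _
        rw [QuotientGroup.eq, show (g * a)⁻¹ * a = (a⁻¹ * g * a)⁻¹ by group, inv_mem_iff]
      rw [hset]
      exact (hopen i).preimage (by continuity)⟩

lemma le_stab_quot_one (i : ι) :
    N i ≤ stab (quotObj hopen i) (QuotientGroup.mk (1 : G) : G ⧸ N i) := by
  intro n hn
  show (Action.ofMulAction G (G ⧸ N i)).ρ n (QuotientGroup.mk 1) = QuotientGroup.mk 1
  rw [Action.ofMulAction_apply, MulAction.Quotient.smul_mk]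
  change (QuotientGroup.mk (n • (1 : G)) : G ⧸ N i) = QuotientGroup.mk 1
  rw [QuotientGroup.eq]
  simpa using (N i).inv_mem hn

/-- The natural projection between quotient `G`-sets. -/
def projHom {i j : ι} (h : N i ≤ N j) : quotObj hopen i ⟶ quotObj hopen j where
  hom.hom := TypeCat.ofHom ⇑(QuotientGroup.map (N i) (N j) (MonoidHom.id G) (fun g hg => by simpa using h hg))
  hom.comm := by
    intro g
    ext q
    induction q using QuotientGroup.induction_on with
    | _ a =>
      show QuotientGroup.map (N i) (N j) (MonoidHom.id G) _
          ((Action.ofMulAction G (G ⧸ N i)).ρ g (QuotientGroup.mk a))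
        = (Action.ofMulAction G (G ⧸ N j)).ρ g
            (QuotientGroup.map (N i) (N j) (MonoidHom.id G) _ (QuotientGroup.mk a))
      rw [Action.ofMulAction_apply, MulAction.Quotient.smul_mk, QuotientGroup.map_mk,
        QuotientGroup.map_mk, Action.ofMulAction_apply, MulAction.Quotient.smul_mk]
      rfl

/-- The compatible family attached to a natural automorphism of the forgetful functor. -/
def eFun (γ : Aut (forgetContGSet G)) : inverseLimit N :=
  ⟨fun i => γ.hom.app (quotObj hopen i) (QuotientGroup.mk (1 : G)), by
    intro i j h
    have hnat := ConcreteCategory.congr_hom (γ.hom.naturality (projHom hopen h)) (QuotientGroup.mk (1 : G) : G ⧸ N i)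
    replace hnat : γ.hom.app (quotObj hopen j) ((forgetContGSet G).map (projHom hopen h)
        (QuotientGroup.mk (1 : G) : G ⧸ N i)) = (forgetContGSet G).map (projHom hopen h)
        (γ.hom.app (quotObj hopen i) (QuotientGroup.mk (1 : G) : G ⧸ N i)) := hnat
    have h1 : (forgetContGSet G).map (projHom hopen h) (QuotientGroup.mk (1 : G) : G ⧸ N i)
        = (QuotientGroup.mk (1 : G) : G ⧸ N j) := by
      show QuotientGroup.map (N i) (N j) (MonoidHom.id G) (fun g hg => by simpa using h hg) (QuotientGroup.mk 1) = _
      rw [QuotientGroup.map_mk]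
      rfl
    have h2 := hnat.symm
    rw [h1] at h2
    exact h2⟩

/-- The orbit map `G ⧸ N i → X` attached to a point with `N i` in its stabilizer. -/
def orbitMap (X : ContGSet G) (x : X.obj.V) {i : ι} (hi : N i ≤ stab X x) :
    G ⧸ N i → X.obj.V := fun q =>
  Quotient.liftOn' q (fun g => X.obj.ρ g x) (fun a b hab => by
    have hab' : a⁻¹ * b ∈ N i := QuotientGroup.leftRel_apply.mp hab
    show X.obj.ρ a x = X.obj.ρ b x
    conv_rhs => rw [show b = a * (a⁻¹ * b) by group]
    rw [rho_mul, rho_stab X x (hi hab')])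

lemma orbitMap_mk (X : ContGSet G) (x : X.obj.V) {i : ι} (hi : N i ≤ stab X x) (a : G) :
    orbitMap X x hi (QuotientGroup.mk a) = X.obj.ρ a x := rfl

/-- The orbit morphism `G ⧸ N i ⟶ X` attached to a point with `N i` in its stabilizer. -/
def orbitHom (X : ContGSet G) (x : X.obj.V) {i : ι} (hi : N i ≤ stab X x) :
    quotObj hopen i ⟶ X where
  hom.hom := TypeCat.ofHom (orbitMap X x hi)
  hom.comm := by
    intro g
    ext q
    induction q using QuotientGroup.induction_on with
    | _ a =>
      show orbitMap X x hi ((Action.ofMulAction G (G ⧸ N i)).ρ g (QuotientGroup.mk a))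
        = X.obj.ρ g (orbitMap X x hi (QuotientGroup.mk a))
      rw [Action.ofMulAction_apply, MulAction.Quotient.smul_mk, orbitMap_mk, orbitMap_mk,
        smul_eq_mul, rho_mul]

include hbasis in
lemma toAut_eFun (γ : Aut (forgetContGSet G)) : toAut hbasis hopen (eFun hopen γ) = γ := by
  refine Iso.ext (NatTrans.ext (funext fun X => ?_))
  ext x
  show act hbasis (eFun hopen γ) X x = γ.hom.app X x
  obtain ⟨i, hi⟩ := exists_le hbasis X x
  have hmk : (QuotientGroup.mk ((eFun hopen γ).1 i).out : G ⧸ N i) = (eFun hopen γ).1 i :=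
    QuotientGroup.out_eq' _
  rw [act_spec hbasis hopen _ X x hi hmk]
  have hnat := ConcreteCategory.congr_hom (γ.hom.naturality (orbitHom hopen X x hi))
    (QuotientGroup.mk (1 : G) : G ⧸ N i)
  replace hnat : γ.hom.app X ((forgetContGSet G).map (orbitHom hopen X x hi)
      (QuotientGroup.mk (1 : G) : G ⧸ N i)) = (forgetContGSet G).map (orbitHom hopen X x hi)
      (γ.hom.app (quotObj hopen i) (QuotientGroup.mk (1 : G) : G ⧸ N i)) := hnat
  have h1 : (forgetContGSet G).map (orbitHom hopen X x hi)
      (QuotientGroup.mk (1 : G) : G ⧸ N i) = x := by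
    show X.obj.ρ 1 x = x
    rw [map_one]
    rfl
  have h2 : γ.hom.app (quotObj hopen i) (QuotientGroup.mk (1 : G) : G ⧸ N i)
      = QuotientGroup.mk ((eFun hopen γ).1 i).out := (QuotientGroup.out_eq' _).symm
  rw [h1, h2] at hnat
  exact hnat.symm

include hbasis in
lemma eFun_toAut (f : inverseLimit N) : eFun hopen (toAut hbasis hopen f) = f := by
  apply Subtype.ext
  funext i
  show act hbasis f (quotObj hopen i) (QuotientGroup.mk (1 : G)) = f.1 i
  rw [act_spec hbasis hopen f _ _ (le_stab_quot_one hopen i) (QuotientGroup.out_eq' (f.1 i))]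
  show (Action.ofMulAction G (G ⧸ N i)).ρ _ _ = _
  rw [Action.ofMulAction_apply, MulAction.Quotient.smul_mk, smul_eq_mul, mul_one,
    QuotientGroup.out_eq']

include hbasis in
lemma toAut_mul (f g : inverseLimit N) :
    toAut hbasis hopen (f * g) = toAut hbasis hopen f * toAut hbasis hopen g := by
  refine Iso.ext (NatTrans.ext (funext fun X => ?_))
  ext x
  rw [Aut.Aut_mul_def]
  show act hbasis (f * g) X x = act hbasis f X (act hbasis g X x)
  exact act_mul hbasis hopen f g X x

end

end Aux

/-- Proposition `P:classicalcompletion` of the paper.  Let `G` be a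
prodiscrete group admitting a fundamental system of neighborhoods of the identity consisting of
open normal subgroups `N i`.  Then the prodiscrete completion `G^∧ = Aut (F_G)` is isomorphic,
as a group, to the inverse limit of the quotients `G / N i`, and under this isomorphism the
canonical map `ι_G` corresponds to the natural map `G → lim_i G/N i`. -/
theorem completion_eq_inverse_limit
    (G : Type u) [Group G] [TopologicalSpace G] [IsTopologicalGroup G]
    {ι : Type u} (N : ι → Subgroup G) [∀ i, (N i).Normal]
    (hopen : ∀ i, IsOpen (N i : Set G))
    (hbasis : (nhds (1 : G)).HasBasis (fun _ : ι => True) (fun i => (N i : Set G))) :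
    ∃ e : Aut (forgetContGSet G) ≃* inverseLimit N,
      ∀ (g : G) (i : ι), ((e (iota G g) : ∀ i, G ⧸ N i) i) = QuotientGroup.mk g := by
  refine ⟨(MulEquiv.mk ⟨toAut hbasis hopen, eFun hopen, eFun_toAut hbasis hopen,
    toAut_eFun hbasis hopen⟩ (fun f g => toAut_mul hbasis hopen f g)).symm, fun g i => ?_⟩
  show (eFun hopen (iota G g)).1 i = QuotientGroup.mk g
  show (iota G g).hom.app (quotObj hopen i) (QuotientGroup.mk (1 : G)) = QuotientGroup.mk g
  show (Action.ofMulAction G (G ⧸ N i)).ρ g (QuotientGroup.mk (1 : G)) = QuotientGroup.mk g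
  rw [Action.ofMulAction_apply, MulAction.Quotient.smul_mk, smul_eq_mul, mul_one]

end ProdiscreteCompletion
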